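/- Under the Golub-Kahan recurrences (w₀ = 0, β₁ s₁ = b, α_k w_k = Aᵀ s_k − β_k w_{k-1}, β_{k+1} s_{k+1} = A w_k − α_k s_k with all α_k, β_k > 0), for every k ≥ 0 there exist polynomials ψ_k of degree k with w_{k+1} = ψ_k(AᵀA) Aᵀ b, and the constant terms satisfy ψ₀(0) = 1/(α₁β₁) and ψ_k(0) = (1/α_{k+1})(φ_k(0) − β_{k+1} ψ_{k-1}(0)) for k ≥ 1, where φ_k(0) = (-1)^k (1/β_{k+1}) ∏_{j=1}^k (α_j/β_j). -/
import Mathlib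

open Finset Matrix Polynomial

/-- Constant term `φ_k(0) = (-1)^k (1/β_{k+1}) ∏_{j=1}^k (α_j/β_j)`. -/
noncomputable def phi (α β : ℕ → ℝ) (l : ℕ) : ℝ :=
  (-1 : ℝ) ^ l * (β (l + 1))⁻¹ * ∏ j ∈ Finset.Icc 1 l, α j / β j

lemma gk_pow_comm_rect {p q : ℕ} (A : Matrix (Fin p) (Fin q) ℝ) (B : Matrix (Fin q) (Fin p) ℝ)
    (k : ℕ) : B * (A * B) ^ k = (B * A) ^ k * B := by
  induction k with
  | zero => simp
  | succ k ih =>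
    rw [pow_succ, pow_succ, ← Matrix.mul_assoc B, ih]
    simp only [Matrix.mul_assoc]

lemma gk_aeval_comm_rect {p q : ℕ} (A : Matrix (Fin p) (Fin q) ℝ) (B : Matrix (Fin q) (Fin p) ℝ)
    (f : Polynomial ℝ) : B * aeval (A * B) f = aeval (B * A) f * B := by
  induction f using Polynomial.induction_on' with
  | add p q hp hq => simp [Matrix.mul_add, Matrix.add_mul, hp, hq]
  | monomial n a =>
    simp only [aeval_monomial, Algebra.algebraMap_eq_smul_one]
    rw [Matrix.smul_mul, Matrix.one_mul, Matrix.smul_mul, Matrix.smul_mul, Matrix.one_mul,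
      Matrix.mul_smul, gk_pow_comm_rect]

/-- Auxiliary pair of polynomial sequences `(ψ_k, π_k)`. -/
noncomputable def gkAux (α β : ℕ → ℝ) : ℕ → Polynomial ℝ × Polynomial ℝ
  | 0 => (Polynomial.C ((α 1 * β 1)⁻¹), Polynomial.C ((β 1)⁻¹))
  | (k+1) =>
      let ψ := (gkAux α β k).1
      let π := (gkAux α β k).2
      let π' := Polynomial.C (β (k+2))⁻¹ * (Polynomial.X * ψ - Polynomial.C (α (k+1)) * π)
      (Polynomial.C (α (k+2))⁻¹ * (π' - Polynomial.C (β (k+2)) * ψ), π')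

lemma gkAux_deg (α β : ℕ → ℝ) (hα : ∀ j, α j ≠ 0) (hβ : ∀ j, β j ≠ 0) :
    ∀ k, ((gkAux α β k).1.natDegree = k ∧ (gkAux α β k).1 ≠ 0) ∧
         ((gkAux α β k).2.natDegree = k ∧ (gkAux α β k).2 ≠ 0) := by
  intro k
  induction k with
  | zero =>
    exact ⟨⟨Polynomial.natDegree_C _,
        Polynomial.C_ne_zero.mpr (inv_ne_zero (mul_ne_zero (hα 1) (hβ 1)))⟩,
      Polynomial.natDegree_C _, Polynomial.C_ne_zero.mpr (inv_ne_zero (hβ 1))⟩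
  | succ k ih =>
    obtain ⟨⟨hψd, hψ0⟩, hπd, hπ0⟩ := ih
    have hXψ : (Polynomial.X * (gkAux α β k).1).natDegree = k + 1 := by
      rw [Polynomial.natDegree_mul Polynomial.X_ne_zero hψ0, Polynomial.natDegree_X, hψd,
        add_comm]
    have hπ'd : (gkAux α β (k+1)).2.natDegree = k + 1 := by
      show (Polynomial.C (β (k+2))⁻¹ * _).natDegree = k + 1
      rw [Polynomial.natDegree_C_mul (inv_ne_zero (hβ (k+2))),
        Polynomial.natDegree_sub_eq_left_of_natDegree_lt, hXψ]
      rw [hXψ]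
      calc (Polynomial.C (α (k+1)) * (gkAux α β k).2).natDegree
          ≤ (Polynomial.C (α (k+1))).natDegree + (gkAux α β k).2.natDegree :=
            Polynomial.natDegree_mul_le
        _ < k + 1 := by simp [hπd]
    have hπ'0 : (gkAux α β (k+1)).2 ≠ 0 := by
      intro h
      rw [h, Polynomial.natDegree_zero] at hπ'd
      exact Nat.succ_ne_zero k hπ'd.symm
    refine ⟨⟨?_, ?_⟩, hπ'd, hπ'0⟩
    · show (Polynomial.C (α (k+2))⁻¹ * ((gkAux α β (k+1)).2 - Polynomial.C (β (k+2)) * (gkAux α β k).1)).natDegree = k + 1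
      rw [Polynomial.natDegree_C_mul (inv_ne_zero (hα (k+2))),
        Polynomial.natDegree_sub_eq_left_of_natDegree_lt, hπ'd]
      rw [hπ'd]
      calc (Polynomial.C (β (k+2)) * (gkAux α β k).1).natDegree
          ≤ (Polynomial.C (β (k+2))).natDegree + (gkAux α β k).1.natDegree :=
            Polynomial.natDegree_mul_le
        _ < k + 1 := by simp [hψd]
    · intro h
      have : ((gkAux α β (k+1)).1).natDegree = k + 1 := by
        show (Polynomial.C (α (k+2))⁻¹ * ((gkAux α β (k+1)).2 - Polynomial.C (β (k+2)) * (gkAux α β k).1)).natDegree = k + 1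
        rw [Polynomial.natDegree_C_mul (inv_ne_zero (hα (k+2))),
          Polynomial.natDegree_sub_eq_left_of_natDegree_lt, hπ'd]
        rw [hπ'd]
        calc (Polynomial.C (β (k+2)) * (gkAux α β k).1).natDegree
            ≤ (Polynomial.C (β (k+2))).natDegree + (gkAux α β k).1.natDegree :=
              Polynomial.natDegree_mul_le
          _ < k + 1 := by simp [hψd]
      rw [h, Polynomial.natDegree_zero] at this
      exact Nat.succ_ne_zero k this.symm

lemma gkAux_pi_coeff (α β : ℕ → ℝ) (hα : ∀ j, α j ≠ 0) (hβ : ∀ j, β j ≠ 0) :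
    ∀ k, (gkAux α β k).2.coeff 0 = phi α β k := by
  intro k
  induction k with
  | zero => simp [gkAux, phi]
  | succ k ih =>
    show (Polynomial.C (β (k+2))⁻¹ * (Polynomial.X * (gkAux α β k).1
        - Polynomial.C (α (k+1)) * (gkAux α β k).2)).coeff 0 = phi α β (k+1)
    rw [Polynomial.mul_coeff_zero, Polynomial.coeff_sub, Polynomial.mul_coeff_zero,
      Polynomial.mul_coeff_zero, Polynomial.coeff_C_zero, Polynomial.coeff_C_zero,
      Polynomial.coeff_X_zero, ih]
    unfold phi
    rw [Finset.prod_Icc_succ_top (Nat.le_add_left 1 k)]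
    field_simp
    ring

theorem golub_kahan_right_lanczos_polynomials
    (m n : ℕ) (A : Matrix (Fin m) (Fin n) ℝ) (b : Fin m → ℝ) (hb : b ≠ 0)
    (α β : ℕ → ℝ) (hα : ∀ j, 0 < α j) (hβ : ∀ j, 0 < β j)
    (s : ℕ → (Fin m → ℝ)) (w : ℕ → (Fin n → ℝ))
    (hw0 : w 0 = 0)
    (hβ1 : β 1 = Real.sqrt (∑ i, b i ^ 2))
    (hs1 : β 1 • s 1 = b)
    (hwrec : ∀ j, 1 ≤ j → α j • w j = Aᵀ.mulVec (s j) - β j • w (j - 1))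
    (hsrec : ∀ j, 1 ≤ j → β (j + 1) • s (j + 1) = A.mulVec (w j) - α j • s j) :
    ∃ ψ : ℕ → Polynomial ℝ,
      (∀ k, (ψ k).natDegree = k ∧
        w (k + 1) = (Polynomial.aeval (Aᵀ * A) (ψ k)).mulVec (Aᵀ.mulVec b)) ∧
      (ψ 0).coeff 0 = 1 / (α 1 * β 1) ∧
      (∀ k, 1 ≤ k → (ψ k).coeff 0 =
        (1 / α (k + 1)) * (phi α β k - β (k + 1) * (ψ (k - 1)).coeff 0)) := by
  have hα' : ∀ j, α j ≠ 0 := fun j => (hα j).ne'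
  have hβ' : ∀ j, β j ≠ 0 := fun j => (hβ j).ne'
  set M := A * Aᵀ with hM
  set N := Aᵀ * A with hN
  set u := Aᵀ.mulVec b with hu
  -- key commutation facts
  have key1 : ∀ f : Polynomial ℝ,
      A.mulVec ((aeval N f).mulVec u) = (aeval M (Polynomial.X * f)).mulVec b := by
    intro f
    rw [hu, Matrix.mulVec_mulVec, Matrix.mulVec_mulVec]
    congr 1
    rw [mul_comm Polynomial.X f, _root_.map_mul, aeval_X, hN, hM, gk_aeval_comm_rect,
      Matrix.mul_assoc]
  have key2 : ∀ f : Polynomial ℝ,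
      Aᵀ.mulVec ((aeval M f).mulVec b) = (aeval N f).mulVec u := by
    intro f
    rw [hu, Matrix.mulVec_mulVec, Matrix.mulVec_mulVec, hM, gk_aeval_comm_rect, hN]
  -- the main induction: formulas for both w and s
  have main : ∀ k, w (k + 1) = (aeval N (gkAux α β k).1).mulVec u ∧
      s (k + 1) = (aeval M (gkAux α β k).2).mulVec b := by
    intro k
    induction k with
    | zero =>
      have hs1' : s 1 = (β 1)⁻¹ • b := by
        rw [← hs1, inv_smul_smul₀ (hβ' 1)]
      have hw1 : w 1 = (α 1)⁻¹ • ((β 1)⁻¹ • u) := by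
        have h := hwrec 1 le_rfl
        rw [hw0, smul_zero, sub_zero, hs1', Matrix.mulVec_smul] at h
        rw [← h, inv_smul_smul₀ (hα' 1)]
      constructor
      · rw [hw1]
        show _ = (aeval N (Polynomial.C ((α 1 * β 1)⁻¹))).mulVec u
        rw [aeval_C, Algebra.algebraMap_eq_smul_one, Matrix.smul_mulVec,
          Matrix.one_mulVec, mul_inv, smul_smul, mul_comm]
      · rw [hs1']
        show _ = (aeval M (Polynomial.C ((β 1)⁻¹))).mulVec b
        rw [aeval_C, Algebra.algebraMap_eq_smul_one, Matrix.smul_mulVec,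
          Matrix.one_mulVec]
    | succ k ih =>
      obtain ⟨ihw, ihs⟩ := ih
      have hsnew : s (k + 2) = (aeval M (gkAux α β (k+1)).2).mulVec b := by
        have h := hsrec (k + 1) (Nat.le_add_left 1 k)
        have h2 : s (k + 2) = (β (k + 2))⁻¹ •
            (A.mulVec (w (k + 1)) - α (k + 1) • s (k + 1)) := by
          rw [← h, inv_smul_smul₀ (hβ' (k+2))]
        rw [h2, ihw, ihs, key1]
        show _ = (aeval M (Polynomial.C (β (k+2))⁻¹ * (Polynomial.X * (gkAux α β k).1
          - Polynomial.C (α (k+1)) * (gkAux α β k).2))).mulVec b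
        simp only [_root_.map_mul, map_sub, aeval_C, aeval_X, ← Algebra.smul_def,
          Matrix.smul_mulVec, Matrix.sub_mulVec]
      refine ⟨?_, hsnew⟩
      have h := hwrec (k + 2) (by omega)
      have h2 : w (k + 2) = (α (k + 2))⁻¹ •
          (Aᵀ.mulVec (s (k + 2)) - β (k + 2) • w (k + 1)) := by
        have : k + 2 - 1 = k + 1 := rfl
        rw [this] at h
        rw [← h, inv_smul_smul₀ (hα' (k+2))]
      rw [h2, hsnew, ihw, key2]
      show _ = (aeval N (Polynomial.C (α (k+2))⁻¹ * ((gkAux α β (k+1)).2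
        - Polynomial.C (β (k+2)) * (gkAux α β k).1))).mulVec u
      simp only [_root_.map_mul, map_sub, aeval_C, aeval_X, ← Algebra.smul_def,
        Matrix.smul_mulVec, Matrix.sub_mulVec]
  refine ⟨fun k => (gkAux α β k).1, fun k => ⟨((gkAux_deg α β hα' hβ' k).1).1, (main k).1⟩,
    ?_, ?_⟩
  · show (Polynomial.C ((α 1 * β 1)⁻¹)).coeff 0 = 1 / (α 1 * β 1)
    rw [Polynomial.coeff_C_zero, one_div]
  · intro k hk
    obtain ⟨k, rfl⟩ := Nat.exists_eq_succ_of_ne_zero (by omega : k ≠ 0)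
    show (Polynomial.C (α (k+2))⁻¹ * ((gkAux α β (k+1)).2
      - Polynomial.C (β (k+2)) * (gkAux α β k).1)).coeff 0 = _
    rw [Polynomial.mul_coeff_zero, Polynomial.coeff_sub, Polynomial.mul_coeff_zero,
      Polynomial.coeff_C_zero, Polynomial.coeff_C_zero, gkAux_pi_coeff α β hα' hβ']
    rw [one_div]
    simp only [Nat.succ_eq_add_one, Nat.add_sub_cancel]
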